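/- Let G be a finite simple graph with adjacency matrix (a_{ij}), let g be an admissible function with g(x) < 1 for all x with d_{S^1}(0,x) > 0, and set c(g) = inf over x with 0 < d_{S^1}(0,x) ≤ π of (2/π)·d_{S^1}(0,x)/(1 − g(x)). Then for EVERY configuration of angles θ_1,…,θ_n ∈ ℝ (not necessarily energy-minimizing), the expected cut satisfies E(θ) ≥ c(g)·( |E|/2 − f(θ_1,…,θ_n)/4 ). -/

import Mathlib

open Real Finset MeasureTheory intervalIntegral

/-- The circle distance between angles `x` and `y`:
the minimum over integers `k` of `|x - y - 2πk|`. -/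
noncomputable def dS1 (x y : ℝ) : ℝ := ⨅ k : ℤ, |x - y - 2 * Real.pi * k|

/-- `g : ℝ → ℝ` is admissible: 2π-periodic, even, differentiable, with
`g 0 = 1 = max g` and `g π = -1 = min g`. -/
def Admissible (g : ℝ → ℝ) : Prop :=
  Function.Periodic g (2 * Real.pi) ∧ (∀ x, g (-x) = g x) ∧ Differentiable ℝ g ∧
    g 0 = 1 ∧ (∀ x, g x ≤ 1) ∧ g Real.pi = -1 ∧ (∀ x, -1 ≤ g x)

/-- The approximation constant associated to an admissible function `g`. -/
noncomputable def cg (g : ℝ → ℝ) : ℝ :=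
  sInf {y : ℝ | ∃ x : ℝ, 0 < dS1 0 x ∧ dS1 0 x ≤ Real.pi ∧
    y = (2 / Real.pi) * dS1 0 x / (1 - g x)}

/-- The Kuramoto-type energy of the configuration θ. -/
noncomputable def energy {n : ℕ} (a : Fin n → Fin n → ℝ) (g : ℝ → ℝ)
    (θ : Fin n → ℝ) : ℝ :=
  ∑ i, ∑ j, a i j * g (θ i - θ j)

/-- The size of the cut induced by the line through the origin at angle `φ`. -/
noncomputable def cutAt {n : ℕ} (a : Fin n → Fin n → ℝ) (θ : Fin n → ℝ) (φ : ℝ) : ℝ :=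
  (1 / 2) * ∑ i, ∑ j, a i j *
    (if Real.sin (θ i - φ) * Real.sin (θ j - φ) < 0 then 1 else 0)

/-- The expected cut under randomized rounding of the configuration θ. -/
noncomputable def expCut {n : ℕ} (a : Fin n → Fin n → ℝ) (θ : Fin n → ℝ) : ℝ :=
  (1 / Real.pi) * ∫ φ in (0:ℝ)..Real.pi, cutAt a θ φ

lemma abs_sub_round_two_pi (x : ℝ) : |x - 2 * Real.pi * (round (x / (2 * Real.pi)) : ℤ)| ≤ Real.pi := by
  have h2pi : (0:ℝ) < 2 * Real.pi := by positivity
  have h := abs_sub_round (x / (2 * Real.pi))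
  have heq : x - 2 * Real.pi * (round (x / (2 * Real.pi)) : ℤ)
      = (2 * Real.pi) * (x / (2 * Real.pi) - (round (x / (2 * Real.pi)) : ℤ)) := by
    field_simp
  rw [heq, abs_mul, abs_of_pos h2pi]
  calc 2 * Real.pi * |x / (2 * Real.pi) - (round (x / (2 * Real.pi)) : ℤ)|
      ≤ 2 * Real.pi * (1/2) := mul_le_mul_of_nonneg_left h h2pi.le
    _ = Real.pi := by ring

lemma dS1_eq_abs (x : ℝ) : dS1 0 x = |x - 2 * Real.pi * (round (x / (2 * Real.pi)) : ℤ)| := by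
  set k0 : ℤ := round (x / (2 * Real.pi)) with hk0
  have hrle : |x - 2 * Real.pi * (k0:ℝ)| ≤ Real.pi := abs_sub_round_two_pi x
  have hbdd : BddBelow (Set.range fun k : ℤ => |0 - x - 2 * Real.pi * k|) :=
    ⟨0, by rintro y ⟨k, rfl⟩; positivity⟩
  refine le_antisymm ?_ ?_
  · have h := ciInf_le hbdd (-k0)
    have he : |0 - x - 2 * Real.pi * ((-k0 : ℤ) : ℝ)| = |x - 2 * Real.pi * (k0:ℝ)| := by
      push_cast
      rw [show 0 - x - 2 * Real.pi * (-(k0:ℝ)) = -(x - 2 * Real.pi * (k0:ℝ)) by ring, abs_neg]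
    rw [he] at h
    exact h
  · refine le_ciInf fun k => ?_
    have hx : 0 - x - 2 * Real.pi * (k:ℝ)
        = -((x - 2 * Real.pi * (k0:ℝ)) + 2 * Real.pi * ((k0 + k : ℤ) : ℝ)) := by
      push_cast; ring
    rw [hx, abs_neg]
    set r : ℝ := x - 2 * Real.pi * (k0:ℝ) with hr
    rcases eq_or_ne (k0 + k) 0 with h | h
    · simp [h]
    · have h1 : (1:ℝ) ≤ |((k0 + k : ℤ) : ℝ)| := by
        rw [← Int.cast_abs]; exact_mod_cast Int.one_le_abs h
      have h2 : 2 * Real.pi ≤ |2 * Real.pi * ((k0 + k : ℤ) : ℝ)| := by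
        rw [abs_mul, abs_of_pos (by positivity : (0:ℝ) < 2 * Real.pi)]
        nlinarith [Real.pi_pos]
      have h3 : |2 * Real.pi * ((k0 + k : ℤ) : ℝ)| - |r| ≤ |r + 2 * Real.pi * ((k0 + k : ℤ) : ℝ)| := by
        have h4 := abs_sub_abs_le_abs_sub (2 * Real.pi * ((k0 + k : ℤ) : ℝ)) (-r)
        rw [sub_neg_eq_add, abs_neg, add_comm (2 * Real.pi * ((k0 + k : ℤ) : ℝ)) r] at h4
        exact h4
      linarith [Real.pi_pos]

lemma dS1_nonneg (x : ℝ) : 0 ≤ dS1 0 x := by rw [dS1_eq_abs]; positivity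

lemma dS1_le_pi (x : ℝ) : dS1 0 x ≤ Real.pi := by
  rw [dS1_eq_abs]; exact abs_sub_round_two_pi x

lemma cos_dS1 (x : ℝ) : Real.cos (dS1 0 x) = Real.cos x := by
  rw [dS1_eq_abs, Real.cos_abs]
  have h := Real.cos_add_int_mul_two_pi (x - 2 * Real.pi * (round (x / (2 * Real.pi)) : ℤ)) (round (x / (2 * Real.pi)))
  rw [← h]; ring_nf

lemma indInt {p : ℝ → Prop} [DecidablePred p] (hp : MeasurableSet {φ | p φ}) (a b : ℝ) :
    IntervalIntegrable (fun φ => if p φ then (1:ℝ) else 0) volume a b := by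
  rw [intervalIntegrable_iff]
  refine Integrable.mono' (g := fun _ => (1:ℝ))
    (integrableOn_const measure_Ioc_lt_top.ne) ?_ (ae_of_all _ fun φ => ?_)
  · exact ((measurable_const.ite hp measurable_const).aestronglyMeasurable :
      AEStronglyMeasurable (fun φ => if p φ then (1:ℝ) else 0) _)
  · by_cases h : p φ <;> simp [h]

lemma key (A B : ℝ) :
    dS1 0 (A - B) ≤ ∫ φ in (0:ℝ)..Real.pi,
      (if Real.sin (A - φ) * Real.sin (B - φ) < 0 then (1:ℝ) else 0) := by
  have hpi := Real.pi_pos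
  set d : ℝ := dS1 0 (A - B) with hd
  have hd0 : 0 ≤ d := dS1_nonneg _
  have hdpi : d ≤ Real.pi := dS1_le_pi _
  -- rewrite the condition
  have hiff : ∀ φ : ℝ, (Real.sin (A - φ) * Real.sin (B - φ) < 0 ↔
      Real.cos d < Real.cos (A + B - 2 * φ)) := by
    intro φ
    have h1 : Real.cos (A - B) - Real.cos (A + B - 2 * φ)
        = 2 * (Real.sin (A - φ) * Real.sin (B - φ)) := by
      rw [Real.cos_sub_cos]
      rw [show (A - B + (A + B - 2 * φ)) / 2 = A - φ by ring,
          show (A - B - (A + B - 2 * φ)) / 2 = -(B - φ) by ring, Real.sin_neg]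
      ring
    rw [hd, cos_dS1]
    constructor <;> intro h <;> nlinarith
  have hcongr : (∫ φ in (0:ℝ)..Real.pi,
      (if Real.sin (A - φ) * Real.sin (B - φ) < 0 then (1:ℝ) else 0))
      = ∫ φ in (0:ℝ)..Real.pi,
      (if Real.cos d < Real.cos (A + B - 2 * φ) then (1:ℝ) else 0) := by
    refine intervalIntegral.integral_congr fun φ _ => ?_
    simp only [hiff φ]
  rw [hcongr]
  set h : ℝ → ℝ := fun φ => if Real.cos d < Real.cos (A + B - 2 * φ) then (1:ℝ) else 0 with hh
  have hint : ∀ a b : ℝ, IntervalIntegrable h volume a b := fun a b =>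
    indInt (measurableSet_lt measurable_const
      (Real.continuous_cos.comp (by continuity)).measurable) a b
  have hnonneg : ∀ φ : ℝ, 0 ≤ h φ := fun φ => by
    simp only [hh]; split <;> norm_num
  rcases eq_or_lt_of_le hd0 with h0 | hdpos
  · rw [← h0]
    exact intervalIntegral.integral_nonneg hpi.le fun u _ => hnonneg u
  -- d > 0
  have hper : Function.Periodic h Real.pi := by
    intro φ
    simp only [hh]
    rw [show A + B - 2 * (φ + Real.pi) = (A + B - 2 * φ) - 2 * Real.pi by ring,
        Real.cos_sub_two_pi]
  set c : ℝ := (A + B) / 2 - Real.pi / 2 with hc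
  have hshift : (∫ φ in (0:ℝ)..Real.pi, h φ) = ∫ φ in c..(c + Real.pi), h φ := by
    have := hper.intervalIntegral_add_eq 0 c
    simpa using this
  rw [hshift]
  set a1 : ℝ := (A + B) / 2 - d / 2 with ha1
  set b1 : ℝ := (A + B) / 2 + d / 2 with hb1
  have hsub : (∫ φ in a1..b1, h φ) ≤ ∫ φ in c..(c + Real.pi), h φ := by
    refine intervalIntegral.integral_mono_interval (by rw [hc, ha1]; linarith)
      (by rw [ha1, hb1]; linarith) (by rw [hc, hb1]; linarith)
      (ae_of_all _ fun φ => hnonneg φ) (hint _ _)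
  have hval : (∫ φ in a1..b1, h φ) = d := by
    have hae : ∀ᵐ φ : ℝ, φ ≠ b1 := by
      refine (ae_iff.2 ?_)
      simpa using (by simp : volume ({b1} : Set ℝ) = 0)
    have : (∫ φ in a1..b1, h φ) = ∫ φ in a1..b1, (1:ℝ) := by
      refine intervalIntegral.integral_congr_ae ?_
      filter_upwards [hae] with φ hφ hmem
      rw [Set.uIoc_of_le (by rw [ha1, hb1]; linarith)] at hmem
      have hlt1 : a1 < φ := hmem.1
      have hlt2 : φ < b1 := lt_of_le_of_ne hmem.2 hφ
      have habs : |A + B - 2 * φ| < d := by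
        rw [abs_lt]; constructor <;> [skip; skip] <;> (rw [ha1] at hlt1; rw [hb1] at hlt2; linarith)
      have hcc : Real.cos d < Real.cos (A + B - 2 * φ) := by
        rw [← Real.cos_abs (A + B - 2 * φ)]
        exact Real.cos_lt_cos_of_nonneg_of_le_pi (abs_nonneg _) hdpi habs
      simp only [hh, if_pos hcc]
    rw [this, intervalIntegral.integral_const, smul_eq_mul, mul_one, hb1, ha1]
    ring
  linarith

lemma g_one {g : ℝ → ℝ} (hg : Admissible g) {x : ℝ} (h : dS1 0 x = 0) : g x = 1 := by
  rw [dS1_eq_abs, abs_eq_zero, sub_eq_zero] at h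
  have h2 : g x = g (((round (x / (2 * Real.pi)) : ℤ) : ℝ) * (2 * Real.pi)) := by
    congr 1
    nth_rewrite 1 [h]
    ring
  rw [h2, hg.1.int_mul_eq, hg.2.2.2.1]

set_option maxHeartbeats 1000000 in
theorem stmt5 (n : ℕ) (a : Fin n → Fin n → ℝ)
    (hsymm : ∀ i j, a i j = a j i)
    (h01 : ∀ i j, a i j = 0 ∨ a i j = 1)
    (hdiag : ∀ i, a i i = 0)
    (E : ℝ) (hE : ∑ i, ∑ j, a i j = 2 * E)
    (g : ℝ → ℝ) (hg : Admissible g)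
    (hlt : ∀ x, 0 < dS1 0 x → g x < 1)
    (θ : Fin n → ℝ) :
    expCut a θ ≥ cg g * (E / 2 - energy a g θ / 4) := by
  have hpi := Real.pi_pos
  set I : Fin n → Fin n → ℝ := fun i j => ∫ φ in (0:ℝ)..Real.pi,
    (if Real.sin (θ i - φ) * Real.sin (θ j - φ) < 0 then (1:ℝ) else 0) with hI
  have hmeas : ∀ i j : Fin n, MeasurableSet
      {φ : ℝ | Real.sin (θ i - φ) * Real.sin (θ j - φ) < 0} := fun i j =>
    measurableSet_lt (Continuous.measurable (by continuity)) measurable_const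
  have hint : ∀ i j : Fin n, IntervalIntegrable
      (fun φ => a i j * (if Real.sin (θ i - φ) * Real.sin (θ j - φ) < 0 then (1:ℝ) else 0))
      volume 0 Real.pi := fun i j => (indInt (hmeas i j) 0 Real.pi).const_mul _
  have hrow : ∀ i : Fin n, (∫ φ in (0:ℝ)..Real.pi,
      ∑ j, a i j * (if Real.sin (θ i - φ) * Real.sin (θ j - φ) < 0 then (1:ℝ) else 0))
      = ∑ j, a i j * I i j := by
    intro i
    rw [intervalIntegral.integral_finset_sum (fun j _ => hint i j)]
    exact Finset.sum_congr rfl fun j _ => intervalIntegral.integral_const_mul _ _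
  have htop : (∫ φ in (0:ℝ)..Real.pi, ∑ i, ∑ j, a i j *
      (if Real.sin (θ i - φ) * Real.sin (θ j - φ) < 0 then (1:ℝ) else 0))
      = ∑ i, ∫ φ in (0:ℝ)..Real.pi, ∑ j, a i j *
      (if Real.sin (θ i - φ) * Real.sin (θ j - φ) < 0 then (1:ℝ) else 0) := by
    refine intervalIntegral.integral_finset_sum
      (f := fun i φ => ∑ j, a i j *
        (if Real.sin (θ i - φ) * Real.sin (θ j - φ) < 0 then (1:ℝ) else 0))
      (fun i _ => ?_)
    have hs : (fun φ : ℝ => ∑ j, a i j *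
        (if Real.sin (θ i - φ) * Real.sin (θ j - φ) < 0 then (1:ℝ) else 0))
        = ∑ j, (fun φ => a i j *
        (if Real.sin (θ i - φ) * Real.sin (θ j - φ) < 0 then (1:ℝ) else 0)) := by
      funext φ
      simp [Finset.sum_apply]
    beta_reduce
    rw [hs]
    exact IntervalIntegrable.sum _ (fun j _ => hint i j)
  have h1 : (∫ φ in (0:ℝ)..Real.pi, cutAt a θ φ)
      = (1/2) * ∑ i, ∑ j, a i j * I i j := by
    unfold cutAt
    rw [intervalIntegral.integral_const_mul, htop]
    congr 1
    exact Finset.sum_congr rfl fun i _ => hrow i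
  have hbdd : BddBelow {y : ℝ | ∃ x : ℝ, 0 < dS1 0 x ∧ dS1 0 x ≤ Real.pi ∧
      y = (2 / Real.pi) * dS1 0 x / (1 - g x)} := by
    refine ⟨0, ?_⟩
    rintro y ⟨x, hx1, _, rfl⟩
    have h1x : 0 < 1 - g x := by linarith [hlt x hx1]
    have h2x := dS1_nonneg x
    positivity
  have hterm : ∀ i j : Fin n, cg g / 4 * (a i j * (1 - g (θ i - θ j)))
      ≤ 1 / (2 * Real.pi) * (a i j * I i j) := by
    intro i j
    rcases h01 i j with h | h
    · simp [h]
    rw [h, one_mul, one_mul]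
    have hkey : dS1 0 (θ i - θ j) ≤ I i j := key (θ i) (θ j)
    rcases eq_or_lt_of_le (dS1_nonneg (θ i - θ j)) with h0 | hdpos
    · rw [g_one hg h0.symm, sub_self, mul_zero]
      exact mul_nonneg (by positivity) (h0.le.trans hkey)
    · have hgx : g (θ i - θ j) < 1 := hlt _ hdpos
      have hne : (1:ℝ) - g (θ i - θ j) ≠ 0 := by linarith
      have h2 : cg g ≤ (2 / Real.pi) * dS1 0 (θ i - θ j) / (1 - g (θ i - θ j)) :=
        csInf_le hbdd ⟨θ i - θ j, hdpos, dS1_le_pi _, rfl⟩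
      have h3 : cg g / 4 * (1 - g (θ i - θ j))
          ≤ ((2 / Real.pi) * dS1 0 (θ i - θ j) / (1 - g (θ i - θ j))) / 4
            * (1 - g (θ i - θ j)) := by
        apply mul_le_mul_of_nonneg_right _ (by linarith)
        linarith
      have h4 : ((2 / Real.pi) * dS1 0 (θ i - θ j) / (1 - g (θ i - θ j))) / 4
          * (1 - g (θ i - θ j)) = dS1 0 (θ i - θ j) / (2 * Real.pi) := by
        field_simp
        ring
      have h5 : dS1 0 (θ i - θ j) / (2 * Real.pi) ≤ 1 / (2 * Real.pi) * I i j := by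
        rw [show 1 / (2 * Real.pi) * I i j = I i j / (2 * Real.pi) by ring]
        gcongr
      linarith
  have hsum : ∑ i, ∑ j, cg g / 4 * (a i j * (1 - g (θ i - θ j)))
      ≤ ∑ i, ∑ j, 1 / (2 * Real.pi) * (a i j * I i j) :=
    Finset.sum_le_sum fun i _ => Finset.sum_le_sum fun j _ => hterm i j
  have hL : expCut a θ = ∑ i, ∑ j, 1 / (2 * Real.pi) * (a i j * I i j) := by
    unfold expCut
    rw [h1]
    rw [Finset.mul_sum, Finset.mul_sum]
    simp only [Finset.mul_sum]
    refine Finset.sum_congr rfl fun i _ => Finset.sum_congr rfl fun j _ => ?_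
    ring
  have hR : cg g * (E / 2 - energy a g θ / 4)
      = ∑ i, ∑ j, cg g / 4 * (a i j * (1 - g (θ i - θ j))) := by
    have hE' : E / 2 = (∑ i, ∑ j, a i j) / 4 := by linarith
    unfold energy
    rw [hE']
    rw [show cg g * ((∑ i, ∑ j, a i j) / 4 - (∑ i, ∑ j, a i j * g (θ i - θ j)) / 4)
        = cg g / 4 * ((∑ i, ∑ j, a i j) - ∑ i, ∑ j, a i j * g (θ i - θ j)) by ring]
    rw [← Finset.sum_sub_distrib]
    simp only [← Finset.sum_sub_distrib, Finset.mul_sum]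
    refine Finset.sum_congr rfl fun i _ => Finset.sum_congr rfl fun j _ => ?_
    ring
  rw [hL, hR, ge_iff_le]
  exact hsum
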